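/- Let a ∈ (0,1), b > 0, m ∈ ℝ, and define G_m(t) = F(1-a,b;2b+1;t) - (1-t)^{1-m} F(1-a,b+1;2b+1;t) for t ∈ (0,1). Then lim_{t→0⁺} G_m(t)/t = (a+2b)/(1+2b) - m. Consequently, if G_m(t) ≥ 0 for all t ∈ (0,1), then m ≤ (a+2b)/(1+2b), and if G_m(t) ≤ 0 for all t ∈ (0,1), then m ≥ (a+2b)/(1+2b). -/

import Mathlib

open Polynomial

/-- Pochhammer symbol `(a)_n` for real `a`. -/
noncomputable def poch (a : ℝ) (n : ℕ) : ℝ := (ascPochhammer ℝ n).eval a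

/-- Gaussian hypergeometric function `F(a,b;c;z)`. -/
noncomputable def hypF (a b c z : ℝ) : ℝ :=
  ∑' n : ℕ, poch a n * poch b n / poch c n * z ^ n / n.factorial

lemma poch_zero (a : ℝ) : poch a 0 = 1 := by simp [poch]

lemma poch_one (a : ℝ) : poch a 1 = a := by simp [poch]

lemma poch_succ (a : ℝ) (n : ℕ) : poch a (n + 1) = poch a n * (a + n) := by
  simp [poch, ascPochhammer_succ_right]

lemma poch_pos {a : ℝ} (ha : 0 < a) (n : ℕ) : 0 < poch a n := by
  induction n with
  | zero => simp [poch_zero]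
  | succ n ih =>
    rw [poch_succ]
    have : (0:ℝ) < a + n := by positivity
    positivity

lemma poch_mono {a c : ℝ} (ha : 0 < a) (hac : a ≤ c) (n : ℕ) : poch a n ≤ poch c n := by
  induction n with
  | zero => simp [poch_zero]
  | succ n ih =>
    rw [poch_succ, poch_succ]
    have h1 : (0:ℝ) < a + n := by positivity
    have := poch_pos ha n
    nlinarith

lemma poch_le_factorial {a : ℝ} (h0 : 0 < a) (h1 : a ≤ 1) (n : ℕ) :
    poch a n ≤ n.factorial := by
  induction n with
  | zero => simp [poch_zero]
  | succ n ih =>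
    rw [poch_succ, Nat.factorial_succ]
    have hp := poch_pos h0 n
    have hfac : (0:ℝ) < n.factorial := by positivity
    have h2 : a + n ≤ (n:ℝ) + 1 := by linarith
    push_cast
    nlinarith

/-- Key slope lemma for power series with coefficients in [0,1] and constant term 1. -/
lemma series_slope_tendsto (k : ℕ → ℝ) (hk0 : k 0 = 1)
    (hnn : ∀ n, 0 ≤ k n) (hle : ∀ n, k n ≤ 1) :
    Filter.Tendsto (fun t => ((∑' n : ℕ, k n * t ^ n) - 1) / t)
      (nhdsWithin 0 (Set.Ioi 0)) (nhds (k 1)) := by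
  have key : ∀ t ∈ Set.Ioo (0:ℝ) 1,
      ‖((∑' n : ℕ, k n * t ^ n) - 1) / t - k 1‖ ≤ t / (1 - t) := by
    intro t ht
    obtain ⟨ht0, ht1⟩ := ht
    have hgeo : Summable (fun n : ℕ => t ^ n) :=
      summable_geometric_of_lt_one ht0.le ht1
    have hbd : ∀ (j : ℕ), ∀ n : ℕ, k (n + j) * t ^ n ≤ t ^ n := fun j n =>
      mul_le_of_le_one_left (pow_nonneg ht0.le n) (hle (n + j))
    have hnn' : ∀ (j : ℕ), ∀ n : ℕ, 0 ≤ k (n + j) * t ^ n := fun j n =>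
      mul_nonneg (hnn (n + j)) (pow_nonneg ht0.le n)
    have hs : ∀ j : ℕ, Summable (fun n : ℕ => k (n + j) * t ^ n) := fun j =>
      Summable.of_nonneg_of_le (hnn' j) (hbd j) hgeo
    have hs0 : Summable (fun n : ℕ => k n * t ^ n) := by simpa using hs 0
    have e1 : (∑' n : ℕ, k n * t ^ n) = 1 + (∑' n : ℕ, k (n + 1) * t ^ n) * t := by
      rw [Summable.tsum_eq_zero_add hs0]
      simp only [pow_zero, hk0, one_mul]
      congr 1
      rw [← tsum_mul_right]
      exact tsum_congr fun n => by ring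
    have e2 : (∑' n : ℕ, k (n + 1) * t ^ n)
        = k 1 + (∑' n : ℕ, k (n + 2) * t ^ n) * t := by
      rw [Summable.tsum_eq_zero_add (hs 1)]
      simp only [pow_zero, mul_one]
      congr 1
      rw [← tsum_mul_right]
      exact tsum_congr fun n => by ring
    have ht0' : t ≠ 0 := ht0.ne'
    have e3 : ((∑' n : ℕ, k n * t ^ n) - 1) / t - k 1
        = (∑' n : ℕ, k (n + 2) * t ^ n) * t := by
      rw [e1, e2]; field_simp; ring
    rw [e3]
    have hsum_le : (∑' n : ℕ, k (n + 2) * t ^ n) ≤ (1 - t)⁻¹ := by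
      have := Summable.tsum_le_tsum (hbd 2) (hs 2) hgeo
      rwa [tsum_geometric_of_lt_one ht0.le ht1] at this
    have hsum_nn : 0 ≤ (∑' n : ℕ, k (n + 2) * t ^ n) := tsum_nonneg (hnn' 2)
    rw [Real.norm_eq_abs, abs_of_nonneg (by positivity), div_eq_mul_inv t,
      mul_comm t]
    exact mul_le_mul_of_nonneg_right hsum_le ht0.le
  have hbound : Filter.Tendsto (fun t : ℝ => t / (1 - t))
      (nhdsWithin 0 (Set.Ioi 0)) (nhds 0) := by
    have hc : ContinuousAt (fun t : ℝ => t / (1 - t)) 0 := by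
      apply ContinuousAt.div (by fun_prop) (by fun_prop)
      norm_num
    simpa using hc.tendsto.mono_left nhdsWithin_le_nhds
  have hmem : Set.Ioo (0:ℝ) 1 ∈ nhdsWithin (0:ℝ) (Set.Ioi 0) :=
    Ioo_mem_nhdsGT_of_mem (by norm_num : (0:ℝ) ∈ Set.Ico (0:ℝ) 1)
  have h0 : Filter.Tendsto
      (fun t => ((∑' n : ℕ, k n * t ^ n) - 1) / t - k 1)
      (nhdsWithin 0 (Set.Ioi 0)) (nhds 0) := by
    apply squeeze_zero_norm' _ hbound
    exact Filter.eventually_of_mem hmem key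
  have := h0.add_const (k 1)
  simpa using this

lemma hypF_eq_tsum (A B C z : ℝ) :
    hypF A B C z = ∑' n : ℕ, (poch A n * poch B n / poch C n / n.factorial) * z ^ n := by
  unfold hypF
  exact tsum_congr fun n => by ring

lemma hypF_slope (a B b : ℝ) (ha : a ∈ Set.Ioo (0:ℝ) 1) (hb : 0 < b)
    (hB : 0 < B) (hBC : B ≤ 2 * b + 1) :
    Filter.Tendsto (fun t => (hypF (1 - a) B (2 * b + 1) t - 1) / t)
      (nhdsWithin 0 (Set.Ioi 0)) (nhds ((1 - a) * B / (2 * b + 1))) := by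
  set k : ℕ → ℝ := fun n => poch (1 - a) n * poch B n / poch (2*b+1) n / n.factorial with hk
  have ha1 : 0 < 1 - a := by linarith [ha.2]
  have ha2 : 1 - a ≤ 1 := by linarith [ha.1]
  have hC : (0:ℝ) < 2 * b + 1 := by linarith
  have hk0 : k 0 = 1 := by simp [hk, poch_zero]
  have hnn : ∀ n, 0 ≤ k n := by
    intro n
    have h1 := poch_pos ha1 n
    have h2 := poch_pos hB n
    have h3 := poch_pos hC n
    have h4 : (0:ℝ) < n.factorial := by positivity
    positivity
  have hle : ∀ n, k n ≤ 1 := by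
    intro n
    have h1 := poch_le_factorial ha1 ha2 n
    have h2 := poch_mono hB hBC n
    have h3 := poch_pos hC n
    have h4 : (0:ℝ) < n.factorial := by positivity
    have h5 := poch_pos ha1 n
    have h6 := poch_pos hB n
    show poch (1 - a) n * poch B n / poch (2*b+1) n / n.factorial ≤ 1
    rw [div_div, div_le_one (by positivity)]
    nlinarith
  have := series_slope_tendsto k hk0 hnn hle
  have hk1 : k 1 = (1 - a) * B / (2 * b + 1) := by
    simp [hk, poch_one]
  rw [hk1] at this
  refine this.congr fun t => ?_
  rw [hypF_eq_tsum]

theorem Gm_limit_and_necessary (a b m : ℝ) (ha : a ∈ Set.Ioo (0 : ℝ) 1) (hb : 0 < b)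
    (G : ℝ → ℝ)
    (hG : ∀ t, G t = hypF (1 - a) b (2 * b + 1) t
      - (1 - t) ^ (1 - m) * hypF (1 - a) (b + 1) (2 * b + 1) t) :
    Filter.Tendsto (fun t => G t / t) (nhdsWithin 0 (Set.Ioi 0))
        (nhds ((a + 2 * b) / (1 + 2 * b) - m)) ∧
      ((∀ t ∈ Set.Ioo (0 : ℝ) 1, G t ≥ 0) → m ≤ (a + 2 * b) / (1 + 2 * b)) ∧
      ((∀ t ∈ Set.Ioo (0 : ℝ) 1, G t ≤ 0) → m ≥ (a + 2 * b) / (1 + 2 * b)) := by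
  have T1 := hypF_slope a b b ha hb hb (by linarith)
  have T2 := hypF_slope a (b+1) b ha hb (by linarith) (by linarith)
  -- derivative of (1-t)^(1-m) at 0
  have hderiv : HasDerivAt (fun t : ℝ => (1 - t) ^ (1 - m)) (-(1 - m)) 0 := by
    have h1 : HasDerivAt (fun t : ℝ => 1 - t) (-1) 0 := by
      simpa using (hasDerivAt_id (0:ℝ)).const_sub 1
    have h2 : HasDerivAt (fun x : ℝ => x ^ (1 - m)) ((1 - m) * (1:ℝ) ^ (1 - m - 1)) (1 - 0) := by
      simpa using Real.hasDerivAt_rpow_const (p := 1 - m) (x := (1:ℝ)) (Or.inl one_ne_zero)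
    have := h2.comp 0 h1
    simpa [Real.one_rpow, Function.comp_def] using this
  have Ts : Filter.Tendsto (fun t : ℝ => ((1 - t) ^ (1 - m) - 1) / t)
      (nhdsWithin 0 (Set.Ioi 0)) (nhds (-(1 - m))) := by
    have := (hasDerivAt_iff_tendsto_slope.mp hderiv).mono_left
      (nhdsWithin_mono _ fun x hx => ne_of_gt hx)
    refine this.congr fun t => ?_
    simp [slope_def_field, Real.one_rpow]
  have Th : Filter.Tendsto (fun t : ℝ => (1 - t) ^ (1 - m))
      (nhdsWithin 0 (Set.Ioi 0)) (nhds 1) := by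
    have hc : ContinuousAt (fun t : ℝ => (1 - t) ^ (1 - m)) 0 :=
      ContinuousAt.rpow_const (by fun_prop) (Or.inl (by norm_num))
    simpa [Real.one_rpow] using hc.tendsto.mono_left nhdsWithin_le_nhds
  have hcomb : Filter.Tendsto (fun t => G t / t) (nhdsWithin 0 (Set.Ioi 0))
      (nhds ((1 - a) * b / (2*b+1) - 1 * ((1 - a) * (b+1) / (2*b+1)) - (-(1 - m)))) := by
    refine Filter.Tendsto.congr (fun t => ?_) ((T1.sub (Th.mul T2)).sub Ts)
    rw [hG]; ring
  have hval : (1 - a) * b / (2*b+1) - 1 * ((1 - a) * (b+1) / (2*b+1)) - (-(1 - m))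
      = (a + 2 * b) / (1 + 2 * b) - m := by
    have : (2*b+1 : ℝ) ≠ 0 := by linarith
    field_simp
    ring
  rw [hval] at hcomb
  refine ⟨hcomb, ?_, ?_⟩
  · intro hpos
    have hmem : Set.Ioo (0:ℝ) 1 ∈ nhdsWithin (0:ℝ) (Set.Ioi 0) :=
      Ioo_mem_nhdsGT_of_mem (by norm_num : (0:ℝ) ∈ Set.Ico (0:ℝ) 1)
    have h0 : (0:ℝ) ≤ (a + 2 * b) / (1 + 2 * b) - m := by
      refine ge_of_tendsto hcomb (Filter.eventually_of_mem hmem fun t ht => ?_)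
      exact div_nonneg (hpos t ht) ht.1.le
    linarith
  · intro hneg
    have hmem : Set.Ioo (0:ℝ) 1 ∈ nhdsWithin (0:ℝ) (Set.Ioi 0) :=
      Ioo_mem_nhdsGT_of_mem (by norm_num : (0:ℝ) ∈ Set.Ico (0:ℝ) 1)
    have h0 : (a + 2 * b) / (1 + 2 * b) - m ≤ 0 := by
      refine le_of_tendsto hcomb (Filter.eventually_of_mem hmem fun t ht => ?_)
      exact div_nonpos_of_nonpos_of_nonneg (hneg t ht) ht.1.le
    linarith
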